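/- In the Khalimsky plane, if p and q are pure points lying on the same diagonal (i.e., |i'-i| = |j'-j| for p=(i,j), q=(i',j')), then the shortest COTS-arc connecting p and q is unique, and it consists exactly of the points of the diagonal between p and q. -/

import Mathlib

open Set

/-- The minimal open neighborhood of a point in a topological space. -/
def minOpenNhd {X : Type*} (t : TopologicalSpace X) (x : X) : Set X :=
  ⋂₀ {U : Set X | t.IsOpen U ∧ x ∈ U}

/-- The specialization-style preorder: `x ≤ y` iff `U_x ⊆ U_y`. -/
def specLE {X : Type*} (t : TopologicalSpace X) (x y : X) : Prop :=
  minOpenNhd t x ⊆ minOpenNhd t y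

/-- Two points are adjacent if distinct and comparable in the specialization order. -/
def Adjacent {X : Type*} (t : TopologicalSpace X) (x y : X) : Prop :=
  x ≠ y ∧ (specLE t x y ∨ specLE t y x)

/-- The adjacency set of a point. -/
def adjSet {X : Type*} (t : TopologicalSpace X) (x : X) : Set X := {y | Adjacent t x y}

/-- A COTS: a connected space in which every 3-point subset has a point separating
the other two. -/
def IsCOTS {X : Type*} (t : TopologicalSpace X) : Prop :=
  @ConnectedSpace X t ∧
    ∀ Y : Set X, Y.ncard = 3 →
      ∃ y ∈ Y, ∃ a ∈ Y \ {y}, ∃ b ∈ Y \ {y},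
        @connectedComponentIn X t {y}ᶜ a ≠ @connectedComponentIn X t {y}ᶜ b

/-- An endpoint of a COTS: a point with at most one neighbor. -/
def IsEndpoint {X : Type*} (t : TopologicalSpace X) (x : X) : Prop :=
  (adjSet t x).ncard ≤ 1

/-- A COTS-path: the continuous image of a finite COTS. -/
def IsCOTSPath {Y : Type*} (tY : TopologicalSpace Y) (P : Set Y) : Prop :=
  ∃ (C : Type) (tC : TopologicalSpace C), Finite C ∧ IsCOTS tC ∧
    ∃ f : C → Y, @Continuous C Y tC tY f ∧ Set.range f = P

/-- A COTS-path with prescribed start and end points. -/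
def IsCOTSPathFromTo {Y : Type*} (tY : TopologicalSpace Y) (P : Set Y) (a b : Y) : Prop :=
  ∃ (C : Type) (tC : TopologicalSpace C), Finite C ∧ IsCOTS tC ∧
    ∃ f : C → Y, @Continuous C Y tC tY f ∧ Set.range f = P ∧
      ∃ c₀ c₁ : C, IsEndpoint tC c₀ ∧ IsEndpoint tC c₁ ∧ f c₀ = a ∧ f c₁ = b

/-- A COTS-arc: the homeomorphic image of a finite COTS. -/
def IsCOTSArc {Y : Type*} (tY : TopologicalSpace Y) (A : Set Y) : Prop :=
  ∃ (C : Type) (tC : TopologicalSpace C), Finite C ∧ IsCOTS tC ∧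
    ∃ f : C → Y, @Topology.IsEmbedding C Y tC tY f ∧ Set.range f = A

/-- A COTS-arc with prescribed endpoints. -/
def IsCOTSArcFromTo {Y : Type*} (tY : TopologicalSpace Y) (A : Set Y) (a b : Y) : Prop :=
  ∃ (C : Type) (tC : TopologicalSpace C), Finite C ∧ IsCOTS tC ∧
    ∃ f : C → Y, @Topology.IsEmbedding C Y tC tY f ∧ Set.range f = A ∧
      ∃ c₀ c₁ : C, IsEndpoint tC c₀ ∧ IsEndpoint tC c₁ ∧ f c₀ = a ∧ f c₁ = b

/-- The COTS-distance: one less than the minimal cardinality of a COTS-arc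
joining two points (`⊤` if there is no such arc). -/
noncomputable def cotsDist {X : Type*} (t : TopologicalSpace X) (x y : X) : ℕ∞ :=
  sInf {n : ℕ∞ | ∃ A : Set X, IsCOTSArcFromTo t A x y ∧ (A.ncard : ℕ∞) = n + 1}

/-- The Khalimsky topology on ℤ. -/
def khal : TopologicalSpace ℤ :=
  TopologicalSpace.generateFrom
    {s : Set ℤ | ∃ n : ℤ, (Odd n ∧ s = {n}) ∨ (Even n ∧ s = {n - 1, n, n + 1})}

/-- The Khalimsky plane topology on ℤ × ℤ. -/
def khalPlane : TopologicalSpace (ℤ × ℤ) := @instTopologicalSpaceProd ℤ ℤ khal khal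

/-- A point of the Khalimsky plane is pure if its coordinates have the same parity. -/
def IsPurePt (p : ℤ × ℤ) : Prop := (Even p.1 ∧ Even p.2) ∨ (Odd p.1 ∧ Odd p.2)

/-- A digital Jordan curve: a finite set of at least 4 points such that removing
any point leaves a COTS-arc. -/
def IsJordanCurve {X : Type*} (t : TopologicalSpace X) (J : Set X) : Prop :=
  J.Finite ∧ 4 ≤ J.ncard ∧ ∀ j ∈ J, IsCOTSArc t (J \ {j})

/-- The interior of a digital Jordan curve in the Khalimsky plane: the union of the
finite (bounded) connected components of its complement. -/
def jInterior (J : Set (ℤ × ℤ)) : Set (ℤ × ℤ) :=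
  ⋃₀ {S | ∃ p ∉ J, S = @connectedComponentIn _ khalPlane Jᶜ p ∧ S.Finite}

/-- The diagonal segment of the Khalimsky plane joining `p` to `q`. -/
def diagSeg (p q : ℤ × ℤ) : Set (ℤ × ℤ) :=
  (fun k : ℤ => (p.1 + k * (q.1 - p.1).sign, p.2 + k * (q.2 - p.2).sign)) ''
    Set.Icc 0 |q.1 - p.1|

def khalMin (n : ℤ) : Set ℤ := if Even n then {n-1,n,n+1} else {n}

lemma mem_khalMin_self (n : ℤ) : n ∈ khalMin n := by
  unfold khalMin; split <;> simp

lemma khalMin_subset_Icc (n : ℤ) : khalMin n ⊆ Icc (n-1) (n+1) := by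
  unfold khalMin; split <;> intro x hx <;>
    simp only [mem_insert_iff, mem_singleton_iff, mem_Icc] at hx ⊢ <;> omega

lemma khalMin_isOpen (n : ℤ) : khal.IsOpen (khalMin n) := by
  apply TopologicalSpace.GenerateOpen.basic
  by_cases h : Even n
  · exact ⟨n, Or.inr ⟨h, by simp [khalMin, h]⟩⟩
  · exact ⟨n, Or.inl ⟨Int.not_even_iff_odd.mp h, by simp [khalMin, h]⟩⟩

lemma khalMin_subset {n : ℤ} {U : Set ℤ} (hU : khal.IsOpen U) (hn : n ∈ U) :
    khalMin n ⊆ U := by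
  unfold khalMin
  by_cases h : Even n
  · simp only [if_pos h]
    -- show {n-1,n,n+1} ⊆ U by induction on GenerateOpen
    have key : ∀ V : Set ℤ, TopologicalSpace.GenerateOpen
        {s : Set ℤ | ∃ m : ℤ, (Odd m ∧ s = {m}) ∨ (Even m ∧ s = {m - 1, m, m + 1})} V →
        n ∈ V → ({n-1,n,n+1} : Set ℤ) ⊆ V := by
      intro V hV
      induction hV with
      | basic s hs =>
        intro hnV
        obtain ⟨m, hm | hm⟩ := hs
        · exfalso; rw [hm.2] at hnV; simp at hnV; subst hnV
          exact (Int.not_odd_iff_even.mpr h) hm.1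
        · rw [hm.2] at hnV ⊢
          have : n = m := by
            simp only [mem_insert_iff, mem_singleton_iff] at hnV
            rcases hm.1 with ⟨k, hk⟩; rcases h with ⟨j, hj⟩; omega
          subst this; exact subset_rfl
      | univ => intro _; exact subset_univ _
      | inter s t _ _ ihs iht => intro hn; exact subset_inter (ihs hn.1) (iht hn.2)
      | sUnion S _ ih =>
        intro hn
        obtain ⟨s, hsS, hns⟩ := hn
        exact (ih s hsS hns).trans (subset_sUnion_of_mem hsS)
    exact key U hU hn
  · simp only [if_neg h]; intro x hx; simp at hx; subst hx; exact hn

lemma minOpenNhd_khal (n : ℤ) : minOpenNhd khal n = khalMin n := by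
  apply subset_antisymm
  · exact sInter_subset_of_mem ⟨khalMin_isOpen n, mem_khalMin_self n⟩
  · intro x hx U hU
    exact khalMin_subset hU.1 hU.2 hx

-- plane
lemma minOpenNhd_khalPlane (x : ℤ × ℤ) :
    minOpenNhd khalPlane x = khalMin x.1 ×ˢ khalMin x.2 := by
  letI : TopologicalSpace ℤ := khal
  letI : TopologicalSpace (ℤ × ℤ) := khalPlane
  apply subset_antisymm
  · exact sInter_subset_of_mem ⟨IsOpen.prod (khalMin_isOpen x.1) (khalMin_isOpen x.2),
      mem_khalMin_self x.1, mem_khalMin_self x.2⟩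
  · intro z hz U hU
    obtain ⟨u, v, hu, hv, hxu, hxv, huv⟩ := isOpen_prod_iff.mp hU.1 x.1 x.2 hU.2
    exact huv ⟨khalMin_subset hu hxu hz.1, khalMin_subset hv hxv hz.2⟩

lemma minOpenNhd_khalPlane_isOpen (x : ℤ × ℤ) : khalPlane.IsOpen (minOpenNhd khalPlane x) := by
  letI : TopologicalSpace ℤ := khal
  rw [minOpenNhd_khalPlane]
  exact IsOpen.prod (khalMin_isOpen x.1) (khalMin_isOpen x.2)

lemma mem_minOpenNhd_self {X : Type*} (t : TopologicalSpace X) (x : X) :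
    x ∈ minOpenNhd t x := by
  intro U hU; exact hU.2

lemma minOpenNhd_subset {X : Type*} {t : TopologicalSpace X} {x : X} {U : Set X}
    (hU : t.IsOpen U) (hx : x ∈ U) : minOpenNhd t x ⊆ U :=
  sInter_subset_of_mem ⟨hU, hx⟩

lemma cheb_of_mem_minOpen {x z : ℤ × ℤ} (h : z ∈ minOpenNhd khalPlane x) :
    |z.1 - x.1| ≤ 1 ∧ |z.2 - x.2| ≤ 1 := by
  rw [minOpenNhd_khalPlane] at h
  have h1 := khalMin_subset_Icc x.1 h.1
  have h2 := khalMin_subset_Icc x.2 h.2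
  simp [Set.mem_Icc] at h1 h2
  constructor <;> rw [abs_le] <;> omega

/-- If `y` is in every open set containing `x` (i.e. `y ∈ minOpenNhd x` and minOpenNhds
behave), the pair `{x,y}` is preconnected. -/
lemma pair_preconnected {X : Type*} {t : TopologicalSpace X} {x y : X}
    (h : ∀ U : Set X, t.IsOpen U → x ∈ U → y ∈ U) :
    @IsPreconnected X t {x, y} := by
  letI := t
  have hx : x ∈ closure {y} := by
    rw [mem_closure_iff]
    intro o ho hxo
    exact ⟨y, h o ho hxo, rfl⟩
  have h1 : @IsPreconnected X t {y} := isPreconnected_singleton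
  apply h1.subset_closure (by simp)
  intro z hz
  rcases hz with rfl | rfl
  · exact hx
  · exact subset_closure rfl

lemma pair_preconnected_plane {x y : ℤ × ℤ} (h : y ∈ minOpenNhd khalPlane x) :
    @IsPreconnected _ khalPlane {x, y} :=
  pair_preconnected (fun U hU hxU => minOpenNhd_subset hU hxU h)

/-- Discrete connectedness/coverage lemma in the Khalimsky plane. -/
lemma coverage {A : Set (ℤ × ℤ)} (hA : @IsPreconnected _ khalPlane A)
    {g : ℤ × ℤ → ℤ} (hg : ∀ x z : ℤ × ℤ, z ∈ minOpenNhd khalPlane x → |g z - g x| ≤ 1)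
    {p q : ℤ × ℤ} (hp : p ∈ A) (hq : q ∈ A) {c : ℤ} (h1 : g p ≤ c) (h2 : c ≤ g q) :
    ∃ x ∈ A, g x = c := by
  letI : TopologicalSpace (ℤ × ℤ) := khalPlane
  by_contra hno
  push_neg at hno
  set U : Set (ℤ × ℤ) := ⋃ x ∈ {x ∈ A | g x < c}, minOpenNhd khalPlane x with hU
  set V : Set (ℤ × ℤ) := ⋃ x ∈ {x ∈ A | c < g x}, minOpenNhd khalPlane x with hV
  have hUo : IsOpen U := isOpen_biUnion (fun x _ => minOpenNhd_khalPlane_isOpen x)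
  have hVo : IsOpen V := isOpen_biUnion (fun x _ => minOpenNhd_khalPlane_isOpen x)
  have hcover : A ⊆ U ∪ V := by
    intro x hx
    rcases lt_trichotomy (g x) c with h | h | h
    · exact Or.inl (mem_biUnion ⟨hx, h⟩ (mem_minOpenNhd_self _ x))
    · exact absurd h (hno x hx)
    · exact Or.inr (mem_biUnion ⟨hx, h⟩ (mem_minOpenNhd_self _ x))
  have hpU : (A ∩ U).Nonempty := by
    refine ⟨p, hp, mem_biUnion ⟨hp, lt_of_le_of_ne h1 (hno p hp)⟩ (mem_minOpenNhd_self _ p)⟩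
  have hqV : (A ∩ V).Nonempty := by
    refine ⟨q, hq, mem_biUnion ⟨hq, lt_of_le_of_ne h2 (fun h : c = g q => (hno q hq) h.symm)⟩
      (mem_minOpenNhd_self _ q)⟩
  obtain ⟨z, hzA, hzU, hzV⟩ := hA U V hUo hVo hcover hpU hqV
  obtain ⟨x, hx, hzx⟩ := mem_iUnion₂.mp hzU
  obtain ⟨x', hx', hzx'⟩ := mem_iUnion₂.mp hzV
  have c1 := (hg x z hzx)
  have c2 := (hg x' z hzx')
  have : g z = c := by
    have := hx.2; have := hx'.2; rw [abs_le] at c1 c2; omega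
  exact hno z hzA this

section Diag

variable {p q : ℤ × ℤ}

/-- abbreviation for the diagonal parametrization -/
def dpt (p q : ℤ × ℤ) (k : ℤ) : ℤ × ℤ :=
  (p.1 + k * (q.1 - p.1).sign, p.2 + k * (q.2 - p.2).sign)

lemma diagSeg_eq : diagSeg p q = dpt p q '' Set.Icc 0 |q.1 - p.1| := rfl

lemma sign_sq {a : ℤ} (h : a ≠ 0) : a.sign * a.sign = 1 := by
  rcases Int.lt_or_lt_of_ne h with h' | h'
  · rw [Int.sign_eq_neg_one_of_neg h']; ring
  · rw [Int.sign_eq_one_of_pos h']; ring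

lemma sign_abs_le (a : ℤ) : |a.sign| ≤ 1 := by
  rcases Int.lt_trichotomy a 0 with h | h | h
  · rw [Int.sign_eq_neg_one_of_neg h]; simp
  · rw [h]; simp
  · rw [Int.sign_eq_one_of_pos h]; simp

variable (hd : |q.1 - p.1| = |q.2 - p.2|) (hD : 0 < |q.1 - p.1|)
include hd hD

lemma q1_ne : q.1 - p.1 ≠ 0 := by intro h; rw [h] at hD; simp at hD
lemma q2_ne : q.2 - p.2 ≠ 0 := by intro h; rw [hd, h] at hD; simp at hD

/-- the parameter function recovers k -/
lemma u_dpt (k : ℤ) : (q.1 - p.1).sign * ((dpt p q k).1 - p.1) = k := by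
  have h1 := sign_sq (q1_ne hd hD)
  simp only [dpt]
  calc (q.1 - p.1).sign * (p.1 + k * (q.1 - p.1).sign - p.1)
      = k * ((q.1 - p.1).sign * (q.1 - p.1).sign) := by ring
    _ = k := by rw [h1, mul_one]

lemma v_dpt (k : ℤ) : (q.2 - p.2).sign * ((dpt p q k).2 - p.2) = k := by
  have h1 := sign_sq (q2_ne hd hD)
  simp only [dpt]
  calc (q.2 - p.2).sign * (p.2 + k * (q.2 - p.2).sign - p.2)
      = k * ((q.2 - p.2).sign * (q.2 - p.2).sign) := by ring
    _ = k := by rw [h1, mul_one]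

lemma dpt_injOn : Set.InjOn (dpt p q) (Set.Icc 0 |q.1 - p.1|) := by
  intro k _ k' _ h
  have := u_dpt (p := p) (q := q) hd hD k
  rw [h, u_dpt hd hD] at this; exact this.symm

include hd in
lemma dpt_zero : dpt p q 0 = p := by simp [dpt]

include hd in
lemma dpt_last : dpt p q |q.1 - p.1| = q := by
  have h1 : |q.1 - p.1| * (q.1 - p.1).sign = q.1 - p.1 := by
    rw [mul_comm]; exact Int.sign_mul_abs _
  have h2 : |q.1 - p.1| * (q.2 - p.2).sign = q.2 - p.2 := by
    rw [hd, mul_comm]; exact Int.sign_mul_abs _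
  simp only [dpt, h1, h2]
  ext <;> simp

end Diag

section Diag2

variable {p q : ℤ × ℤ}

lemma mem_minOpen_of_even {a b : ℤ} {z : ℤ × ℤ} (ha : Even a) (hb : Even b)
    (h1 : |z.1 - a| ≤ 1) (h2 : |z.2 - b| ≤ 1) : z ∈ minOpenNhd khalPlane (a, b) := by
  rw [minOpenNhd_khalPlane]
  refine ⟨?_, ?_⟩ <;> simp only [khalMin, if_pos ha, if_pos hb] <;>
    simp only [Set.mem_insert_iff, Set.mem_singleton_iff] <;> rw [abs_le] at h1 h2 <;> omega

variable (hp : IsPurePt p) (hd : |q.1 - p.1| = |q.2 - p.2|) (hD : 0 < |q.1 - p.1|)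

include hp hd hD in
/-- consecutive diagonal points are comparable -/
lemma dpt_comparable {k : ℤ} :
    dpt p q (k+1) ∈ minOpenNhd khalPlane (dpt p q k) ∨
    dpt p q k ∈ minOpenNhd khalPlane (dpt p q (k+1)) := by
  have hs1 : (q.1 - p.1).sign = 1 ∨ (q.1 - p.1).sign = -1 := by
    rcases Int.lt_or_lt_of_ne (q1_ne hd hD) with h' | h'
    · exact Or.inr (Int.sign_eq_neg_one_of_neg h')
    · exact Or.inl (Int.sign_eq_one_of_pos h')
  have hs2 : (q.2 - p.2).sign = 1 ∨ (q.2 - p.2).sign = -1 := by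
    rcases Int.lt_or_lt_of_ne (q2_ne hd hD) with h' | h'
    · exact Or.inr (Int.sign_eq_neg_one_of_neg h')
    · exact Or.inl (Int.sign_eq_one_of_pos h')
  have hpure : (p.1 + p.2) % 2 = 0 := by
    rcases hp with ⟨h1, h2⟩ | ⟨h1, h2⟩
    · rw [Int.even_iff] at h1 h2; omega
    · rw [Int.odd_iff] at h1 h2; omega
  have e1 : ∀ j : ℤ, (dpt p q j).1 % 2 = (p.1 + j) % 2 := by
    intro j; rcases hs1 with h | h <;> simp only [dpt, h] <;> omega
  have e2 : ∀ j : ℤ, (dpt p q j).2 % 2 = (p.2 + j) % 2 := by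
    intro j; rcases hs2 with h | h <;> simp only [dpt, h] <;> omega
  have d1 : ∀ j : ℤ, |(dpt p q (j+1)).1 - (dpt p q j).1| ≤ 1 := by
    intro j
    have : (dpt p q (j+1)).1 - (dpt p q j).1 = (q.1 - p.1).sign := by simp [dpt]; ring
    rw [this]; exact sign_abs_le _
  have d2 : ∀ j : ℤ, |(dpt p q (j+1)).2 - (dpt p q j).2| ≤ 1 := by
    intro j
    have : (dpt p q (j+1)).2 - (dpt p q j).2 = (q.2 - p.2).sign := by simp [dpt]; ring
    rw [this]; exact sign_abs_le _
  by_cases hk : (p.1 + k) % 2 = 0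
  · left
    have ha : Even ((dpt p q k).1) := Int.even_iff.mpr (by rw [e1]; omega)
    have hb : Even ((dpt p q k).2) := Int.even_iff.mpr (by rw [e2]; omega)
    have := mem_minOpen_of_even (a := (dpt p q k).1) (b := (dpt p q k).2) ha hb
      (z := dpt p q (k+1)) (d1 k) (d2 k)
    simpa using this
  · right
    have ha : Even ((dpt p q (k+1)).1) := Int.even_iff.mpr (by rw [e1]; omega)
    have hb : Even ((dpt p q (k+1)).2) := Int.even_iff.mpr (by rw [e2]; omega)
    have := mem_minOpen_of_even (a := (dpt p q (k+1)).1) (b := (dpt p q (k+1)).2) ha hb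
      (z := dpt p q k) ?_ ?_
    · simpa using this
    · have := d1 k; rw [abs_sub_comm] at this; exact this
    · have := d2 k; rw [abs_sub_comm] at this; exact this

end Diag2

section Diag3

variable {p q : ℤ × ℤ}

lemma mem_diagSeg {k : ℤ} (h0 : 0 ≤ k) (h1 : k ≤ |q.1 - p.1|) : dpt p q k ∈ diagSeg p q :=
  ⟨k, ⟨h0, h1⟩, rfl⟩

lemma p_mem_diagSeg : p ∈ diagSeg p q := by
  have h := mem_diagSeg (p := p) (q := q) le_rfl (abs_nonneg _)
  have : dpt p q 0 = p := by simp [dpt]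
  rwa [this] at h

lemma q_mem_diagSeg (hd : |q.1 - p.1| = |q.2 - p.2|) : q ∈ diagSeg p q := by
  have h1 : |q.1 - p.1| * (q.1 - p.1).sign = q.1 - p.1 := by
    rw [mul_comm]; exact Int.sign_mul_abs _
  have h2 : |q.1 - p.1| * (q.2 - p.2).sign = q.2 - p.2 := by
    rw [hd, mul_comm]; exact Int.sign_mul_abs _
  have h := mem_diagSeg (p := p) (q := q) (abs_nonneg (q.1 - p.1)) le_rfl
  have : dpt p q |q.1 - p.1| = q := by simp only [dpt, h1, h2]; ext <;> simp
  rwa [this] at h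

lemma diagSeg_finite : (diagSeg p q).Finite :=
  ((Set.finite_Icc 0 |q.1 - p.1|).image _)

lemma diagSeg_ncard (hd : |q.1 - p.1| = |q.2 - p.2|) :
    (diagSeg p q).ncard = (q.1 - p.1).natAbs + 1 := by
  rw [diagSeg_eq]
  by_cases hD : 0 < |q.1 - p.1|
  · rw [Set.ncard_image_of_injOn (dpt_injOn hd hD)]
    rw [← Finset.coe_Icc, Set.ncard_coe_finset, Int.card_Icc]
    have habs : |q.1 - p.1| = ((q.1 - p.1).natAbs : ℤ) := Int.abs_eq_natAbs _
    omega
  · have h0 : |q.1 - p.1| = 0 := le_antisymm (not_lt.mp hD) (abs_nonneg _)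
    rw [h0]
    have : Set.Icc (0:ℤ) 0 = {0} := by simp
    rw [this, Set.image_singleton, Set.ncard_singleton]
    have habs : |q.1 - p.1| = ((q.1 - p.1).natAbs : ℤ) := Int.abs_eq_natAbs _
    omega

lemma diagSeg_connected (hp : IsPurePt p) (hd : |q.1 - p.1| = |q.2 - p.2|) :
    @IsConnected _ khalPlane (diagSeg p q) := by
  letI : TopologicalSpace (ℤ × ℤ) := khalPlane
  by_cases hD : 0 < |q.1 - p.1|
  · -- induction on m : ℕ
    have key : ∀ m : ℕ, (m : ℤ) ≤ |q.1 - p.1| →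
        IsConnected (dpt p q '' Set.Icc 0 (m : ℤ)) := by
      intro m
      induction m with
      | zero =>
        intro _
        simp only [Nat.cast_zero]
        have : Set.Icc (0:ℤ) 0 = {0} := by simp
        rw [this, Set.image_singleton]
        exact isConnected_singleton
      | succ n ih =>
        intro hm
        have hsplit : Set.Icc (0:ℤ) ((n:ℤ)+1) = Set.Icc 0 (n:ℤ) ∪ {(n:ℤ), (n:ℤ)+1} := by
          ext x; simp only [Set.mem_Icc, Set.mem_union, Set.mem_insert_iff,
            Set.mem_singleton_iff]; omega
        have himg : dpt p q '' Set.Icc 0 ((n:ℤ)+1) =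
            dpt p q '' Set.Icc 0 (n:ℤ) ∪ {dpt p q (n:ℤ), dpt p q ((n:ℤ)+1)} := by
          push_cast
          rw [hsplit, Set.image_union]
          congr 1
          rw [Set.image_insert_eq, Set.image_singleton]
        push_cast at hm ⊢
        rw [himg]
        apply IsConnected.union
        · exact ⟨dpt p q (n:ℤ), ⟨(n:ℤ), ⟨by positivity, by omega⟩, rfl⟩,
            Or.inl rfl⟩
        · exact ih (by omega)
        · constructor
          · exact ⟨dpt p q (n:ℤ), Or.inl rfl⟩
          · rcases dpt_comparable hp hd hD (k := (n:ℤ)) with h | h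
            · exact pair_preconnected_plane h
            · have := pair_preconnected_plane h
              have hcomm : ({dpt p q ((n:ℤ)+1), dpt p q (n:ℤ)} : Set (ℤ×ℤ)) =
                  {dpt p q (n:ℤ), dpt p q ((n:ℤ)+1)} := Set.pair_comm _ _
              rw [← hcomm]; exact this
    have := key (q.1 - p.1).natAbs (by rw [Int.abs_eq_natAbs])
    rw [diagSeg_eq]
    have habs : ((q.1 - p.1).natAbs : ℤ) = |q.1 - p.1| := (Int.abs_eq_natAbs _).symm
    rw [← habs]
    exact this
  · have h0 : |q.1 - p.1| = 0 := le_antisymm (not_lt.mp hD) (abs_nonneg _)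
    rw [diagSeg_eq, h0]
    have : Set.Icc (0:ℤ) 0 = {0} := by simp
    rw [this, Set.image_singleton]
    exact isConnected_singleton

end Diag3



/-- minimal open nhds in a subspace of the Khalimsky plane -/
lemma minOpenNhd_subtype (S : Set (ℤ × ℤ)) (c : S) :
    minOpenNhd (@instTopologicalSpaceSubtype _ _ khalPlane) c
      = Subtype.val ⁻¹' (minOpenNhd khalPlane c.val) := by
  letI : TopologicalSpace (ℤ × ℤ) := khalPlane
  apply subset_antisymm
  · apply sInter_subset_of_mem
    exact ⟨IsOpen.preimage continuous_subtype_val (minOpenNhd_khalPlane_isOpen c.val),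
      mem_minOpenNhd_self _ _⟩
  · intro z hz W hW
    obtain ⟨U, hU, rfl⟩ := isOpen_induced_iff.mp hW.1
    exact minOpenNhd_subset hU hW.2 hz

/-- comparability in a subspace gives Chebyshev distance ≤ 1 -/
lemma cheb_of_specLE_subtype {S : Set (ℤ × ℤ)} {a b : S}
    (h : specLE (@instTopologicalSpaceSubtype _ _ khalPlane) a b) :
    |(a:ℤ×ℤ).1 - (b:ℤ×ℤ).1| ≤ 1 ∧ |(a:ℤ×ℤ).2 - (b:ℤ×ℤ).2| ≤ 1 := by
  have ha : a ∈ minOpenNhd (@instTopologicalSpaceSubtype _ _ khalPlane) a :=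
    mem_minOpenNhd_self _ _
  have := h ha
  rw [minOpenNhd_subtype] at this
  exact cheb_of_mem_minOpen this

lemma exists_middle {α : Type*} (g : α → ℤ) (a b c : α)
    (h12 : g a ≠ g b) (h13 : g a ≠ g c) (h23 : g b ≠ g c) :
    ∃ y ∈ ({a,b,c} : Set α), ∃ x ∈ ({a,b,c} : Set α), ∃ z ∈ ({a,b,c} : Set α),
      g x < g y ∧ g y < g z := by
  rcases h12.lt_or_gt with h1 | h1 <;> rcases h13.lt_or_gt with h2 | h2 <;>
    rcases h23.lt_or_gt with h3 | h3
  · exact ⟨b, by simp, a, by simp, c, by simp, h1, h3⟩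
  · exact ⟨c, by simp, a, by simp, b, by simp, h2, h3⟩
  · omega
  · exact ⟨a, by simp, c, by simp, b, by simp, h2, h1⟩
  · exact ⟨a, by simp, b, by simp, c, by simp, h1, h2⟩
  · omega
  · exact ⟨c, by simp, b, by simp, a, by simp, h3, h2⟩
  · exact ⟨b, by simp, c, by simp, a, by simp, h3, h1⟩

section ArcConstruction

variable {p q : ℤ × ℤ}

/-- parameter of a point of the diagonal -/
noncomputable def dparam (p q : ℤ × ℤ) (x : ℤ × ℤ) : ℤ := (q.1 - p.1).sign * (x.1 - p.1)

lemma diag_val_eq (x : ℤ × ℤ) (hx : x ∈ diagSeg p q) :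
    ∃ k : ℤ, 0 ≤ k ∧ k ≤ |q.1 - p.1| ∧ x = dpt p q k := by
  obtain ⟨k, hk, rfl⟩ := hx
  exact ⟨k, hk.1, hk.2, rfl⟩

lemma dparam_dpt (hd : |q.1 - p.1| = |q.2 - p.2|) (hD : 0 < |q.1 - p.1|) (k : ℤ) :
    dparam p q (dpt p q k) = k := u_dpt hd hD k

lemma dparam_cheb {x z : ℤ × ℤ} (h : |z.1 - x.1| ≤ 1) :
    |dparam p q z - dparam p q x| ≤ 1 := by
  have : dparam p q z - dparam p q x = (q.1 - p.1).sign * (z.1 - x.1) := by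
    simp only [dparam]; ring
  rw [this, abs_mul]
  calc |(q.1 - p.1).sign| * |z.1 - x.1| ≤ 1 * 1 :=
        mul_le_mul (sign_abs_le _) h (abs_nonneg _) zero_le_one
    _ = 1 := one_mul 1

lemma diag_param_inj (hd : |q.1 - p.1| = |q.2 - p.2|) (hD : 0 < |q.1 - p.1|)
    {x y : ℤ × ℤ} (hx : x ∈ diagSeg p q) (hy : y ∈ diagSeg p q)
    (h : dparam p q x = dparam p q y) : x = y := by
  obtain ⟨k, _, _, rfl⟩ := diag_val_eq x hx
  obtain ⟨k', _, _, rfl⟩ := diag_val_eq y hy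
  rw [dparam_dpt hd hD, dparam_dpt hd hD] at h
  rw [h]

lemma diag_is_arc (hp : IsPurePt p) (hd : |q.1 - p.1| = |q.2 - p.2|) :
    IsCOTSArcFromTo khalPlane (diagSeg p q) p q := by
  letI : TopologicalSpace (ℤ × ℤ) := khalPlane
  haveI hfin : (diagSeg p q).Finite := diagSeg_finite
  haveI : Finite (diagSeg p q) := hfin.to_subtype
  set S := diagSeg p q with hS
  set tS := @instTopologicalSpaceSubtype _ _ khalPlane with htS
  set π : S → ℤ := fun x => dparam p q x.val with hπ
  -- the key fact : comparability in S gives parameter distance ≤ 1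
  have hπcheb : ∀ x z : S, (z : ℤ×ℤ) ∈ minOpenNhd khalPlane x.val → |π z - π x| ≤ 1 := by
    intro x z hz
    exact dparam_cheb (cheb_of_mem_minOpen hz).1
  have hπinj : 0 < |q.1 - p.1| → Function.Injective π := by
    intro hD x y h
    exact Subtype.ext (diag_param_inj hd hD x.2 y.2 h)
  have hsep : ∀ Y : Set S, Y.ncard = 3 →
      ∃ y ∈ Y, ∃ a ∈ Y \ {y}, ∃ b ∈ Y \ {y},
        @connectedComponentIn S tS {y}ᶜ a ≠ @connectedComponentIn S tS {y}ᶜ b := by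
    intro Y hY
    obtain ⟨A, B, Cc, hAB, hAC, hBC, rfl⟩ := Set.ncard_eq_three.mp hY
    -- D > 0 : otherwise S is a subsingleton
    have hD : 0 < |q.1 - p.1| := by
      by_contra h0
      have h0 : |q.1 - p.1| = 0 := le_antisymm (not_lt.mp h0) (abs_nonneg _)
      obtain ⟨k, hk1, hk2, hvA⟩ := diag_val_eq A.val A.2
      obtain ⟨k', hk1', hk2', hvB⟩ := diag_val_eq B.val B.2
      have : k = 0 := by omega
      have : k' = 0 := by omega
      exact hAB (Subtype.ext (by rw [hvA, hvB]; congr 1 <;> omega))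
    -- parameters are distinct
    have hπAB : π A ≠ π B := fun h => hAB (hπinj hD h)
    have hπAC : π A ≠ π Cc := fun h => hAC (hπinj hD h)
    have hπBC : π B ≠ π Cc := fun h => hBC (hπinj hD h)
    obtain ⟨y, hy, a, ha, b, hb, hay, hyb⟩ := exists_middle π A B Cc hπAB hπAC hπBC
    have hane : a ≠ y := fun h => by rw [h] at hay; omega
    have hbne : b ≠ y := fun h => by rw [h] at hyb; omega
    refine ⟨y, hy, a, ⟨ha, hane⟩, b, ⟨hb, hbne⟩, ?_⟩
    intro heq
    set T := @connectedComponentIn S tS {y}ᶜ a with hT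
    have haT : a ∈ T := mem_connectedComponentIn hane
    have hbT : b ∈ T := heq.symm ▸ mem_connectedComponentIn hbne
    have hTpre : IsPreconnected T := isPreconnected_connectedComponentIn
    have hTsub : T ⊆ {y}ᶜ := connectedComponentIn_subset _ _
    set U : Set S := ⋃ x ∈ {x : S | π x < π y}, minOpenNhd tS x with hU
    set V : Set S := ⋃ x ∈ {x : S | π y < π x}, minOpenNhd tS x with hV
    have hmo : ∀ x : S, IsOpen (minOpenNhd tS x) := by
      intro x
      rw [htS, minOpenNhd_subtype]
      exact IsOpen.preimage continuous_subtype_val (minOpenNhd_khalPlane_isOpen x.val)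
    have hUo : IsOpen U := isOpen_biUnion (fun x _ => hmo x)
    have hVo : IsOpen V := isOpen_biUnion (fun x _ => hmo x)
    have hcov : T ⊆ U ∪ V := by
      intro z hz
      have hzy : z ≠ y := hTsub hz
      have : π z ≠ π y := fun h => hzy (hπinj hD h)
      rcases this.lt_or_gt with h | h
      · exact Or.inl (Set.mem_biUnion h (mem_minOpenNhd_self _ z))
      · exact Or.inr (Set.mem_biUnion h (mem_minOpenNhd_self _ z))
    have hTU : (T ∩ U).Nonempty := ⟨a, haT, Set.mem_biUnion hay (mem_minOpenNhd_self _ a)⟩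
    have hTV : (T ∩ V).Nonempty := ⟨b, hbT, Set.mem_biUnion hyb (mem_minOpenNhd_self _ b)⟩
    obtain ⟨z, hzT, hzU, hzV⟩ := hTpre U V hUo hVo hcov hTU hTV
    obtain ⟨x, hx, hzx⟩ := Set.mem_iUnion₂.mp hzU
    obtain ⟨x', hx', hzx'⟩ := Set.mem_iUnion₂.mp hzV
    rw [htS, minOpenNhd_subtype] at hzx hzx'
    have c1 := hπcheb x z hzx
    have c2 := hπcheb x' z hzx'
    have : π z = π y := by
      simp only [Set.mem_setOf_eq] at hx hx'
      rw [abs_le] at c1 c2; omega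
    have hzy : z = y := hπinj hD this
    exact (hTsub hzT) (Set.mem_singleton_iff.mpr hzy)
  -- endpoint lemma
  have hadj : ∀ (e : S) (w : ℤ), π e = w →
      adjSet tS e ⊆ {z : S | π z = w - 1 ∨ π z = w + 1} := by
    intro e w he z hz
    obtain ⟨hne, hcomp⟩ := hz
    have hcheb : |π z - π e| ≤ 1 := by
      rcases hcomp with h | h
      · have := cheb_of_specLE_subtype (S := S) (a := e) (b := z) h
        have h1 : |(z:ℤ×ℤ).1 - (e:ℤ×ℤ).1| ≤ 1 := by rw [abs_sub_comm]; exact this.1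
        exact dparam_cheb h1
      · exact dparam_cheb (cheb_of_specLE_subtype (S := S) (a := z) (b := e) h).1
    have hzne : π z ≠ π e := by
      intro h0
      by_cases hD : 0 < |q.1 - p.1|
      · exact (hne.symm) (hπinj hD h0)
      · -- degenerate : S is a subsingleton, z = e anyway
        have h0' : |q.1 - p.1| = 0 := le_antisymm (not_lt.mp hD) (abs_nonneg _)
        obtain ⟨k, hk1, hk2, hv⟩ := diag_val_eq z.val z.2
        obtain ⟨k', hk1', hk2', hv'⟩ := diag_val_eq e.val e.2
        have : k = 0 := by omega
        have : k' = 0 := by omega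
        exact hne.symm (Subtype.ext (by rw [hv, hv']; congr 1 <;> omega))
    rw [he] at hcheb hzne
    simp only [Set.mem_setOf_eq]
    rw [abs_le] at hcheb; omega
  -- parameter bounds
  have hbound : ∀ z : S, 0 ≤ π z ∧ π z ≤ |q.1 - p.1| := by
    intro z
    obtain ⟨k, hk0, hk1, hv⟩ := diag_val_eq z.val z.2
    by_cases hD : 0 < |q.1 - p.1|
    · have : π z = k := by
        show dparam p q z.val = k
        rw [hv, dparam_dpt hd hD]
      omega
    · have habs : |q.1 - p.1| = 0 := le_antisymm (not_lt.mp hD) (abs_nonneg _)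
      have h0 : q.1 - p.1 = 0 := abs_eq_zero.mp habs
      have : π z = 0 := by
        show dparam p q z.val = 0
        simp [dparam, h0]
      rw [this, habs]
      exact ⟨le_rfl, le_rfl⟩
  have hπp : π ⟨p, p_mem_diagSeg⟩ = 0 := by show dparam p q p = 0; simp [dparam]
  have hπq : π ⟨q, q_mem_diagSeg hd⟩ = |q.1 - p.1| := by
    show (q.1 - p.1).sign * (q.1 - p.1) = |q.1 - p.1|
    rcases lt_trichotomy (q.1 - p.1) 0 with h | h | h
    · rw [Int.sign_eq_neg_one_of_neg h, abs_of_neg h]; ring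
    · rw [h]; simp
    · rw [Int.sign_eq_one_of_pos h, abs_of_pos h]; ring
  -- any π-level set bounds ncard by 1
  have hsingle : ∀ (w : ℤ) (E : Set S), (E ⊆ {z : S | π z = w}) → E.ncard ≤ 1 := by
    intro w E hE
    have hfin' : E.Finite := Set.toFinite _
    apply (Set.ncard_le_one_iff hfin').mpr
    intro a b ha hb
    have ha' := hE ha; have hb' := hE hb
    simp only [Set.mem_setOf_eq] at ha' hb'
    by_cases hD : 0 < |q.1 - p.1|
    · exact hπinj hD (ha'.trans hb'.symm)
    · have habs : |q.1 - p.1| = 0 := le_antisymm (not_lt.mp hD) (abs_nonneg _)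
      obtain ⟨k, hk0, hk1, hv⟩ := diag_val_eq a.val a.2
      obtain ⟨k', hk0', hk1', hv'⟩ := diag_val_eq b.val b.2
      rw [habs] at hk1 hk1'
      have hka : k = 0 := by omega
      have hkb : k' = 0 := by omega
      exact Subtype.ext (by rw [hv, hv', hka, hkb])
  -- endpoints
  have hendP : IsEndpoint tS ⟨p, p_mem_diagSeg⟩ := by
    apply hsingle 1
    intro z hz
    have h1 := hadj ⟨p, p_mem_diagSeg⟩ 0 hπp hz
    have h2 := (hbound z).1
    simp only [Set.mem_setOf_eq] at h1 ⊢
    omega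
  have hendQ : IsEndpoint tS ⟨q, q_mem_diagSeg hd⟩ := by
    apply hsingle (|q.1 - p.1| - 1)
    intro z hz
    have h1 := hadj ⟨q, q_mem_diagSeg hd⟩ (|q.1 - p.1|) hπq hz
    have h2 := (hbound z).2
    simp only [Set.mem_setOf_eq] at h1 ⊢
    omega
  exact ⟨↥S, tS, ‹Finite ↥S›,
    ⟨Subtype.connectedSpace (diagSeg_connected hp hd), hsep⟩,
    Subtype.val, Topology.IsEmbedding.subtypeVal, Subtype.range_val,
    ⟨p, p_mem_diagSeg⟩, ⟨q, q_mem_diagSeg hd⟩, hendP, hendQ, rfl, rfl⟩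

end ArcConstruction

section Lower

variable {p q : ℤ × ℤ}

/-- Extract basic facts from an arc. -/
lemma arc_facts {A : Set (ℤ × ℤ)} (h : IsCOTSArcFromTo khalPlane A p q) :
    A.Finite ∧ @IsPreconnected _ khalPlane A ∧ p ∈ A ∧ q ∈ A := by
  letI : TopologicalSpace (ℤ × ℤ) := khalPlane
  obtain ⟨C, tC, hfin, hcots, f, hemb, hrange, c₀, c₁, _, _, h0, h1⟩ := h
  haveI := hfin
  haveI : @ConnectedSpace C tC := hcots.1
  have hcont : @Continuous C _ tC _ f := hemb.continuous
  have hconn : IsConnected (Set.range f) := @isConnected_range C _ tC _ _ f hcont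
  rw [hrange] at hconn
  refine ⟨?_, hconn.isPreconnected, ?_, ?_⟩
  · rw [← hrange]; exact Set.finite_range f
  · rw [← hrange, ← h0]; exact Set.mem_range_self c₀
  · rw [← hrange, ← h1]; exact Set.mem_range_self c₁

/-- coverage by parameters for a preconnected set containing p and q -/
lemma param_coverage {A : Set (ℤ × ℤ)} (hA : @IsPreconnected _ khalPlane A)
    (hp : p ∈ A) (hq : q ∈ A) {c : ℤ} (h0 : 0 ≤ c) (h1 : c ≤ |q.1 - p.1|) :
    ∃ x ∈ A, dparam p q x = c := by
  apply coverage hA (g := dparam p q) ?_ hp hq ?_ ?_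
  · intro x z hz
    exact dparam_cheb (cheb_of_mem_minOpen hz).1
  · show dparam p q p ≤ c
    simp only [dparam]; simpa using h0
  · show c ≤ dparam p q q
    have : dparam p q q = |q.1 - p.1| := by
      show (q.1 - p.1).sign * (q.1 - p.1) = |q.1 - p.1|
      rcases lt_trichotomy (q.1 - p.1) 0 with h | h | h
      · rw [Int.sign_eq_neg_one_of_neg h, abs_of_neg h]; ring
      · rw [h]; simp
      · rw [Int.sign_eq_one_of_pos h, abs_of_pos h]; ring
    rw [this]; exact h1

/-- the lower bound for the cardinality of any preconnected set containing p,q -/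
lemma card_lower {A : Set (ℤ × ℤ)} (hA : @IsPreconnected _ khalPlane A)
    (hfin : A.Finite) (hp : p ∈ A) (hq : q ∈ A) :
    (q.1 - p.1).natAbs + 1 ≤ A.ncard := by
  have h : ∀ c : ℤ, c ∈ Set.Icc 0 |q.1 - p.1| → ∃ x ∈ A, dparam p q x = c := by
    intro c hc
    exact param_coverage hA hp hq hc.1 hc.2
  choose! a haA hau using h
  have hsub : a '' Set.Icc 0 |q.1 - p.1| ⊆ A := by
    rintro x ⟨c, hc, rfl⟩; exact haA c hc
  have hinj : Set.InjOn a (Set.Icc 0 |q.1 - p.1|) := by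
    intro c hc c' hc' hcc
    rw [← hau c hc, ← hau c' hc', hcc]
  have h1 : (a '' Set.Icc 0 |q.1 - p.1|).ncard = (q.1 - p.1).natAbs + 1 := by
    rw [Set.ncard_image_of_injOn hinj, ← Finset.coe_Icc, Set.ncard_coe_finset, Int.card_Icc]
    have habs : |q.1 - p.1| = ((q.1 - p.1).natAbs : ℤ) := Int.abs_eq_natAbs _
    omega
  rw [← h1]
  exact Set.ncard_le_ncard hsub hfin

/-- the squeeze lemma for integer sequences -/
lemma squeeze {f : ℤ → ℤ} {D : ℤ} (hD : 0 ≤ D) (h0 : f 0 = 0) (hDq : f D = D)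
    (hstep : ∀ k, 0 ≤ k → k < D → |f (k+1) - f k| ≤ 1) :
    ∀ k, 0 ≤ k → k ≤ D → f k = k := by
  have hup : ∀ k, 0 ≤ k → k ≤ D → f k ≤ k := by
    intro k hk
    refine Int.le_induction (m := 0) (motive := fun k _ => k ≤ D → f k ≤ k) ?_ ?_ k hk
    · intro _; rw [h0]
    · intro n hn ih hD'
      have h1 := hstep n hn (by omega)
      have h2 := ih (by omega)
      rw [abs_le] at h1; omega
  have hdown : ∀ m, 0 ≤ m → m ≤ D → D - m ≤ f (D - m) := by
    intro m hm
    refine Int.le_induction (m := 0) (motive := fun m _ => m ≤ D → D - m ≤ f (D - m)) ?_ ?_ m hm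
    · intro _; rw [sub_zero, hDq]
    · intro n hn ih hD'
      have h1 := hstep (D - (n+1)) (by omega) (by omega)
      have h2 := ih (by omega)
      have he : D - (n+1) + 1 = D - n := by ring
      rw [he] at h1
      rw [abs_le] at h1; omega
  intro k hk hkD
  have h1 := hup k hk hkD
  have h2 := hdown (D - k) (by omega) (by omega)
  have he : D - (D - k) = k := by ring
  rw [he] at h2
  omega

end Lower

section Uniq

variable {p q : ℤ × ℤ}

lemma sign_mul_self_abs (a : ℤ) : a.sign * a = |a| := by
  rcases lt_trichotomy a 0 with h | h | h
  · rw [Int.sign_eq_neg_one_of_neg h, abs_of_neg h]; ring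
  · rw [h]; simp
  · rw [Int.sign_eq_one_of_pos h, abs_of_pos h]; ring

lemma arc_eq_diag (hp : IsPurePt p) (hd : |q.1 - p.1| = |q.2 - p.2|)
    {A : Set (ℤ × ℤ)} (hA : IsCOTSArcFromTo khalPlane A p q)
    (hcard : A.ncard = (q.1 - p.1).natAbs + 1) : A = diagSeg p q := by
  letI : TopologicalSpace (ℤ × ℤ) := khalPlane
  obtain ⟨hfin, hpre, hpA, hqA⟩ := arc_facts hA
  have habs : |q.1 - p.1| = ((q.1 - p.1).natAbs : ℤ) := Int.abs_eq_natAbs _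
  by_cases hD : 0 < |q.1 - p.1|
  · -- main case
    set D := |q.1 - p.1| with hDdef
    set u : ℤ × ℤ → ℤ := dparam p q with hu
    set v : ℤ × ℤ → ℤ := fun x => (q.2 - p.2).sign * (x.2 - p.2) with hv
    have hup : u p = 0 := by simp [hu, dparam]
    have huq : u q = D := by
      show (q.1 - p.1).sign * (q.1 - p.1) = D
      rw [sign_mul_self_abs]
    have hvp : v p = 0 := by simp [hv]
    have hvq : v q = D := by
      show (q.2 - p.2).sign * (q.2 - p.2) = D
      rw [sign_mul_self_abs, hd]
    have hvcheb : ∀ x z : ℤ × ℤ, |z.2 - x.2| ≤ 1 → |v z - v x| ≤ 1 := by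
      intro x z h
      have : v z - v x = (q.2 - p.2).sign * (z.2 - x.2) := by simp only [hv]; ring
      rw [this, abs_mul]
      calc |(q.2 - p.2).sign| * |z.2 - x.2| ≤ 1 * 1 :=
            mul_le_mul (sign_abs_le _) h (abs_nonneg _) zero_le_one
        _ = 1 := one_mul 1
    -- choose representatives
    have h : ∀ c : ℤ, c ∈ Set.Icc 0 D → ∃ x ∈ A, u x = c := by
      intro c hc
      exact param_coverage hpre hpA hqA hc.1 hc.2
    choose! a haA hau using h
    have hsub : a '' Set.Icc 0 D ⊆ A := by
      rintro x ⟨c, hc, rfl⟩; exact haA c hc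
    have hinj : Set.InjOn a (Set.Icc 0 D) := by
      intro c hc c' hc' hcc
      rw [← hau c hc, ← hau c' hc', hcc]
    have hBcard : (a '' Set.Icc 0 D).ncard = (q.1 - p.1).natAbs + 1 := by
      rw [Set.ncard_image_of_injOn hinj, ← Finset.coe_Icc, Set.ncard_coe_finset, Int.card_Icc]
      omega
    have hBA : a '' Set.Icc 0 D = A :=
      Set.eq_of_subset_of_ncard_le hsub (by rw [hBcard, hcard]) hfin
    -- u is injective on A
    have hInjA : ∀ x ∈ A, ∀ y ∈ A, u x = u y → x = y := by
      intro x hx y hy hxy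
      rw [← hBA] at hx hy
      obtain ⟨c, hc, rfl⟩ := hx
      obtain ⟨c', hc', rfl⟩ := hy
      rw [hau c hc, hau c' hc'] at hxy
      rw [hxy]
    have hurange : ∀ x ∈ A, 0 ≤ u x ∧ u x ≤ D := by
      intro x hx
      rw [← hBA] at hx
      obtain ⟨c, hc, rfl⟩ := hx
      rw [hau c hc]; exact ⟨hc.1, hc.2⟩
    have ha0 : a 0 = p := by
      apply hInjA _ (haA 0 (by constructor <;> omega)) _ hpA
      rw [hau 0 (by constructor <;> omega), hup]
    have haD : a D = q := by
      apply hInjA _ (haA D (by constructor <;> omega)) _ hqA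
      rw [hau D (by constructor <;> omega), huq]
    -- consecutive points are comparable
    have hcomp : ∀ k, 0 ≤ k → k < D →
        a (k+1) ∈ minOpenNhd khalPlane (a k) ∨ a k ∈ minOpenNhd khalPlane (a (k+1)) := by
      intro k hk0 hk1
      by_contra hnc
      push_neg at hnc
      set U : Set (ℤ × ℤ) := ⋃ x ∈ {x ∈ A | u x ≤ k}, minOpenNhd khalPlane x with hU
      set V : Set (ℤ × ℤ) := ⋃ x ∈ {x ∈ A | k+1 ≤ u x}, minOpenNhd khalPlane x with hV
      have hUo : IsOpen U := isOpen_biUnion (fun x _ => minOpenNhd_khalPlane_isOpen x)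
      have hVo : IsOpen V := isOpen_biUnion (fun x _ => minOpenNhd_khalPlane_isOpen x)
      have hcov : A ⊆ U ∪ V := by
        intro x hx
        rcases le_or_gt (u x) k with h | h
        · exact Or.inl (Set.mem_biUnion ⟨hx, h⟩ (mem_minOpenNhd_self _ x))
        · exact Or.inr (Set.mem_biUnion ⟨hx, h⟩ (mem_minOpenNhd_self _ x))
      have hAU : (A ∩ U).Nonempty :=
        ⟨p, hpA, Set.mem_biUnion ⟨hpA, by rw [hup]; omega⟩ (mem_minOpenNhd_self _ p)⟩
      have hAV : (A ∩ V).Nonempty :=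
        ⟨q, hqA, Set.mem_biUnion ⟨hqA, by rw [huq]; omega⟩ (mem_minOpenNhd_self _ q)⟩
      obtain ⟨z, hzA, hzU, hzV⟩ := hpre U V hUo hVo hcov hAU hAV
      obtain ⟨x, hx, hzx⟩ := Set.mem_iUnion₂.mp hzU
      obtain ⟨x', hx', hzx'⟩ := Set.mem_iUnion₂.mp hzV
      have c1 : |u z - u x| ≤ 1 := dparam_cheb (cheb_of_mem_minOpen hzx).1
      have c2 : |u z - u x'| ≤ 1 := dparam_cheb (cheb_of_mem_minOpen hzx').1
      obtain ⟨hxA, hxk⟩ := hx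
      obtain ⟨hx'A, hx'k⟩ := hx'
      rw [abs_le] at c1 c2
      have huz : u z = k ∨ u z = k + 1 := by omega
      rcases huz with huz | huz
      · -- z = a k, x' = a (k+1)
        have hza : z = a k := by
          apply hInjA _ hzA _ (haA k (by constructor <;> omega))
          rw [hau k (by constructor <;> omega), huz]
        have hx'a : x' = a (k+1) := by
          apply hInjA _ hx'A _ (haA (k+1) (by constructor <;> omega))
          rw [hau (k+1) (by constructor <;> omega)]
          omega
        rw [hza, hx'a] at hzx'
        exact hnc.2 hzx'
      · have hza : z = a (k+1) := by
          apply hInjA _ hzA _ (haA (k+1) (by constructor <;> omega))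
          rw [hau (k+1) (by constructor <;> omega), huz]
        have hxa : x = a k := by
          apply hInjA _ hxA _ (haA k (by constructor <;> omega))
          rw [hau k (by constructor <;> omega)]
          omega
        rw [hza, hxa] at hzx
        exact hnc.1 hzx
    -- squeeze : v (a k) = k
    have hvk : ∀ k, 0 ≤ k → k ≤ D → v (a k) = k := by
      apply squeeze (f := fun k => v (a k)) (le_of_lt hD)
      · rw [ha0, hvp]
      · rw [haD, hvq]
      · intro k hk0 hk1
        rcases hcomp k hk0 hk1 with h | h
        · exact hvcheb _ _ (cheb_of_mem_minOpen h).2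
        · have := hvcheb _ _ (cheb_of_mem_minOpen h).2
          rw [abs_sub_comm]; exact this
    -- every point of A is on the diagonal
    have hAdiag : A ⊆ diagSeg p q := by
      intro x hx
      have hx' := hx
      rw [← hBA] at hx'
      obtain ⟨c, hc, rfl⟩ := hx'
      have huc : u (a c) = c := hau c hc
      have hvc : v (a c) = c := hvk c hc.1 hc.2
      have hs1 : (q.1 - p.1).sign * (q.1 - p.1).sign = 1 := sign_sq (q1_ne hd hD)
      have hs2 : (q.2 - p.2).sign * (q.2 - p.2).sign = 1 := sign_sq (q2_ne hd hD)
      have e1 : (a c).1 = p.1 + c * (q.1 - p.1).sign := by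
        have h' : (q.1 - p.1).sign * ((q.1 - p.1).sign * ((a c).1 - p.1))
            = (q.1 - p.1).sign * c := by
          rw [show (q.1 - p.1).sign * ((a c).1 - p.1) = u (a c) from rfl, huc]
        rw [← mul_assoc, hs1, one_mul] at h'
        linear_combination h'
      have e2 : (a c).2 = p.2 + c * (q.2 - p.2).sign := by
        have h' : (q.2 - p.2).sign * ((q.2 - p.2).sign * ((a c).2 - p.2))
            = (q.2 - p.2).sign * c := by
          rw [show (q.2 - p.2).sign * ((a c).2 - p.2) = v (a c) from rfl, hvc]
        rw [← mul_assoc, hs2, one_mul] at h'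
        linear_combination h'
      have : a c = dpt p q c := by
        apply Prod.ext
        · rw [e1]; rfl
        · rw [e2]; rfl
      rw [this]
      exact mem_diagSeg hc.1 hc.2
    exact Set.eq_of_subset_of_ncard_le hAdiag
      (by rw [diagSeg_ncard hd, hcard]) diagSeg_finite
  · -- degenerate case : p = q
    have h1 : q.1 = p.1 := by omega
    have h2 : q.2 = p.2 := by
      have : |q.2 - p.2| = 0 := by rw [← hd]; omega
      have := abs_eq_zero.mp this; omega
    have hqp : q = p := Prod.ext h1 h2
    have hcard1 : A.ncard = 1 := by rw [hcard]; omega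
    obtain ⟨x, hx⟩ := Set.ncard_eq_one.mp hcard1
    have hpx : x = p := by rw [hx] at hpA; exact hpA.symm
    have hdiag : diagSeg p q = {p} := by
      rw [diagSeg_eq]
      have h0 : |q.1 - p.1| = 0 := by omega
      rw [h0]
      have : Set.Icc (0:ℤ) 0 = {0} := by simp
      rw [this, Set.image_singleton]
      have : dpt p q 0 = p := by simp [dpt]
      rw [this]
    rw [hx, hpx, hdiag]

end Uniq

section Dist

variable {p q : ℤ × ℤ}

lemma cotsDist_eq (hp : IsPurePt p) (hd : |q.1 - p.1| = |q.2 - p.2|) :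
    cotsDist khalPlane p q = ((q.1 - p.1).natAbs : ℕ∞) := by
  apply le_antisymm
  · apply sInf_le
    refine ⟨diagSeg p q, diag_is_arc hp hd, ?_⟩
    rw [diagSeg_ncard hd]
    push_cast
    ring
  · apply le_sInf
    rintro n ⟨A, hA, hn⟩
    obtain ⟨hfin, hpre, hpA, hqA⟩ := arc_facts hA
    have hlow : (q.1 - p.1).natAbs + 1 ≤ A.ncard := card_lower hpre hfin hpA hqA
    have hne : n ≠ ⊤ := by
      intro h; rw [h] at hn; simp at hn
    lift n to ℕ using hne
    have : (A.ncard : ℕ∞) = ((n + 1 : ℕ) : ℕ∞) := by rw [hn]; push_cast; ring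
    have hc : A.ncard = n + 1 := Nat.cast_inj.mp this
    exact_mod_cast Nat.le_of_succ_le_succ (by omega : (q.1-p.1).natAbs + 1 ≤ n + 1)

theorem stmt12' (hp : IsPurePt p) (hq : IsPurePt q)
    (hd : |q.1 - p.1| = |q.2 - p.2|) :
    (∃! A : Set (ℤ × ℤ), IsCOTSArcFromTo khalPlane A p q ∧
        (A.ncard : ℕ∞) = cotsDist khalPlane p q + 1) ∧
    ∀ A : Set (ℤ × ℤ), (IsCOTSArcFromTo khalPlane A p q ∧
        (A.ncard : ℕ∞) = cotsDist khalPlane p q + 1) → A = diagSeg p q := by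
  have hdist := cotsDist_eq hp hd
  have hkey : ∀ A : Set (ℤ × ℤ), (IsCOTSArcFromTo khalPlane A p q ∧
      (A.ncard : ℕ∞) = cotsDist khalPlane p q + 1) → A = diagSeg p q := by
    rintro A ⟨h1, h2⟩
    rw [hdist] at h2
    have h3 : (A.ncard : ℕ∞) = (((q.1 - p.1).natAbs + 1 : ℕ) : ℕ∞) := by
      rw [h2]; push_cast; ring
    exact arc_eq_diag hp hd h1 (Nat.cast_inj.mp h3)
  have hself : IsCOTSArcFromTo khalPlane (diagSeg p q) p q ∧
      ((diagSeg p q).ncard : ℕ∞) = cotsDist khalPlane p q + 1 := by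
    refine ⟨diag_is_arc hp hd, ?_⟩
    rw [hdist, diagSeg_ncard hd]
    push_cast; ring
  exact ⟨⟨diagSeg p q, hself, fun A hA => hkey A hA⟩, hkey⟩

end Dist

/-- For pure points on a common diagonal, the shortest COTS-arc joining them is
unique, and it consists exactly of the points of the diagonal between them. -/
theorem stmt12 (p q : ℤ × ℤ) (hp : IsPurePt p) (hq : IsPurePt q)
    (hd : |q.1 - p.1| = |q.2 - p.2|) :
    (∃! A : Set (ℤ × ℤ), IsCOTSArcFromTo khalPlane A p q ∧
        (A.ncard : ℕ∞) = cotsDist khalPlane p q + 1) ∧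
    ∀ A : Set (ℤ × ℤ), (IsCOTSArcFromTo khalPlane A p q ∧
        (A.ncard : ℕ∞) = cotsDist khalPlane p q + 1) → A = diagSeg p q := stmt12' hp hq hd
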